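/- Let N ≥ 4 and define (Λ y)(x) = x(1-x) y''(x) + ( (5/2)(1-x) - (N/2)x ) y'(x). If y ∈ C²((0,1)) satisfies ∫₀¹ y² x^{3/2}(1-x)^{N/2-1} dx < ∞, ∫₀¹ x(1-x) (y')² x^{3/2}(1-x)^{N/2-1} dx < ∞, and ∫₀¹ (Λy)² x^{3/2}(1-x)^{N/2-1} dx < ∞, then there exists a constant C > 0 such that | x^{5/2} (1-x)^{N/2} y'(x) | ≤ C x^{5/4} (1-x)^{N/4} for all x ∈ (0,1). -/

import Mathlib

open Real MeasureTheory Set Filter Topology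

/-- `Λ y = x(1-x) y'' + ((5/2)(1-x) - (N/2)x) y'`. -/
noncomputable def Lam (N : ℝ) (y : ℝ → ℝ) : ℝ → ℝ := fun x =>
  x*(1-x) * deriv (deriv y) x + ((5/2)*(1-x) - (N/2)*x) * deriv y x

noncomputable def wfun (N : ℝ) : ℝ → ℝ := fun t => t ^ ((3:ℝ)/2) * (1-t) ^ (N/2 - 1)

noncomputable def Ffun (N : ℝ) (y : ℝ → ℝ) : ℝ → ℝ :=
  fun t => t ^ ((5:ℝ)/2) * (1-t) ^ (N/2) * deriv y t

lemma wfun_nonneg (N : ℝ) {t : ℝ} (h0 : 0 ≤ t) (h1 : t ≤ 1) : 0 ≤ wfun N t :=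
  mul_nonneg (Real.rpow_nonneg h0 _) (Real.rpow_nonneg (by linarith) _)

lemma wfun_le_left (N : ℝ) (hN : 4 ≤ N) {t : ℝ} (h0 : 0 ≤ t) (h1 : t ≤ 1) :
    wfun N t ≤ t ^ ((3:ℝ)/2) :=
  mul_le_of_le_one_right (Real.rpow_nonneg h0 _)
    (Real.rpow_le_one (by linarith) (by linarith) (by linarith))

lemma wfun_le_right (N : ℝ) {t : ℝ} (h0 : 0 ≤ t) (h1 : t ≤ 1) :
    wfun N t ≤ (1-t) ^ (N/2 - 1) :=
  mul_le_of_le_one_left (Real.rpow_nonneg (by linarith) _)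
    (Real.rpow_le_one h0 h1 (by norm_num))

lemma Ffun_hasDerivAt (N : ℝ) (y : ℝ → ℝ) (hy : ContDiffOn ℝ 2 y (Ioo 0 1))
    {t : ℝ} (ht : t ∈ Ioo (0:ℝ) 1) :
    HasDerivAt (Ffun N y) (wfun N t * Lam N y t) t := by
  obtain ⟨ht0, ht1⟩ := ht
  have h1t : (0:ℝ) < 1 - t := by linarith
  have hcd : ContDiffOn ℝ 1 (deriv y) (Ioo 0 1) :=
    hy.deriv_of_isOpen isOpen_Ioo (by norm_num)
  have hdy : HasDerivAt (deriv y) (deriv (deriv y) t) t :=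
    (((hcd.differentiableOn (by norm_num)).differentiableAt
      (isOpen_Ioo.mem_nhds ⟨ht0, ht1⟩))).hasDerivAt
  have hp1 : HasDerivAt (fun s : ℝ => s ^ ((5:ℝ)/2)) ((5/2) * t ^ ((5:ℝ)/2 - 1)) t :=
    Real.hasDerivAt_rpow_const (Or.inl ht0.ne')
  have hinner : HasDerivAt (fun s : ℝ => 1 - s) (-1) t := (hasDerivAt_id t).const_sub 1
  have hp2 : HasDerivAt (fun s : ℝ => (1-s) ^ (N/2)) (N/2 * (1-t) ^ (N/2 - 1) * (-1)) t :=
    (Real.hasDerivAt_rpow_const (p := N/2) (Or.inl h1t.ne')).comp t hinner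
  have h : HasDerivAt (fun s => s ^ ((5:ℝ)/2) * (1-s) ^ (N/2) * deriv y s)
      ((5/2 * t ^ ((5:ℝ)/2 - 1) * (1-t) ^ (N/2) + t ^ ((5:ℝ)/2) * (N/2 * (1-t) ^ (N/2 - 1) * (-1)))
        * deriv y t + t ^ ((5:ℝ)/2) * (1-t) ^ (N/2) * deriv (deriv y) t) t :=
    (hp1.mul hp2).mul hdy
  refine h.congr_deriv ?_
  have e1 : t ^ ((5:ℝ)/2 - 1) = t * t ^ ((1:ℝ)/2) := by
    rw [show (5:ℝ)/2 - 1 = 1 + 1/2 by norm_num, Real.rpow_add ht0, Real.rpow_one]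
  have e2 : t ^ ((5:ℝ)/2) = t * (t * t ^ ((1:ℝ)/2)) := by
    rw [show (5:ℝ)/2 = 1 + (1 + 1/2) by norm_num, Real.rpow_add ht0, Real.rpow_add ht0,
      Real.rpow_one]
  have e3 : t ^ ((3:ℝ)/2) = t * t ^ ((1:ℝ)/2) := by
    rw [show (3:ℝ)/2 = 1 + 1/2 by norm_num, Real.rpow_add ht0, Real.rpow_one]
  have e4 : (1-t) ^ (N/2) = (1-t) * (1-t) ^ (N/2 - 1) := by
    have h := Real.rpow_add h1t 1 (N/2 - 1)
    rw [Real.rpow_one] at h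
    rw [← h]
    congr 1
    ring
  simp only [wfun, Lam, Ffun, e1, e2, e3, e4]
  ring

lemma wfun_contOn (N : ℝ) : ContinuousOn (wfun N) (Ioo 0 1) := by
  apply ContinuousOn.mul
  · exact continuousOn_id.rpow_const (fun x hx => Or.inl (ne_of_gt hx.1))
  · exact (continuousOn_const.sub continuousOn_id).rpow_const
      (fun x hx => Or.inl (by have h2 := hx.2; intro h; simp only [Pi.sub_apply] at h; rw [sub_eq_zero] at h; simp only [id_eq] at h; linarith))

lemma Lam_contOn (N : ℝ) (y : ℝ → ℝ) (hy : ContDiffOn ℝ 2 y (Ioo 0 1)) :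
    ContinuousOn (Lam N y) (Ioo 0 1) := by
  have hcd : ContDiffOn ℝ 1 (deriv y) (Ioo 0 1) := hy.deriv_of_isOpen isOpen_Ioo (by norm_num)
  have h1 : ContinuousOn (deriv y) (Ioo 0 1) := hcd.continuousOn
  have h2 : ContinuousOn (deriv (deriv y)) (Ioo 0 1) :=
    (hcd.deriv_of_isOpen (m := 0) isOpen_Ioo (by norm_num)).continuousOn
  show ContinuousOn
    (fun x => x*(1-x) * deriv (deriv y) x + ((5/2)*(1-x) - (N/2)*x) * deriv y x) (Ioo 0 1)
  exact (((continuous_id.mul (continuous_const.sub continuous_id)).continuousOn).mul h2).add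
    ((((continuous_const.mul (continuous_const.sub continuous_id)).sub
      (continuous_const.mul continuous_id)).continuousOn).mul h1)

lemma wfun_integrableOn (N : ℝ) (hN : 4 ≤ N) : IntegrableOn (wfun N) (Ioo 0 1) := by
  have hb : IntegrableOn (fun t : ℝ => t ^ ((3:ℝ)/2)) (Ioo 0 1) :=
    (intervalIntegral.integrableOn_Ioo_rpow_iff zero_lt_one).mpr (by norm_num)
  refine hb.mono' ((wfun_contOn N).aestronglyMeasurable measurableSet_Ioo) ?_
  filter_upwards [ae_restrict_mem measurableSet_Ioo] with t ht
  rw [Real.norm_eq_abs, abs_of_nonneg (wfun_nonneg N ht.1.le ht.2.le)]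
  exact wfun_le_left N hN ht.1.le ht.2.le

lemma wlam_abs_integrableOn (N : ℝ) (hN : 4 ≤ N) (y : ℝ → ℝ) (hy : ContDiffOn ℝ 2 y (Ioo 0 1))
    (hyX2 : IntegrableOn
      (fun x => (Lam N y x)^2 * (x ^ ((3:ℝ)/2) * (1-x) ^ (N/2 - 1))) (Ioo 0 1)) :
    IntegrableOn (fun t => wfun N t * |Lam N y t|) (Ioo 0 1) := by
  have hyX2' : IntegrableOn (fun t => (Lam N y t)^2 * wfun N t) (Ioo 0 1) := hyX2
  have hb : IntegrableOn (fun t => (1/2) * ((Lam N y t)^2 * wfun N t + wfun N t)) (Ioo 0 1) :=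
    (hyX2'.add (wfun_integrableOn N hN)).const_mul (1/2)
  refine hb.mono' ?_ ?_
  · exact ((wfun_contOn N).mul (Lam_contOn N y hy).abs).aestronglyMeasurable measurableSet_Ioo
  · filter_upwards [ae_restrict_mem measurableSet_Ioo] with t ht
    have hw := wfun_nonneg N ht.1.le ht.2.le
    rw [Real.norm_eq_abs, abs_of_nonneg (mul_nonneg hw (abs_nonneg _))]
    nlinarith [sq_abs (Lam N y t), mul_nonneg hw (sq_nonneg (|Lam N y t| - 1))]

lemma wlam_integrableOn (N : ℝ) (hN : 4 ≤ N) (y : ℝ → ℝ) (hy : ContDiffOn ℝ 2 y (Ioo 0 1))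
    (hyX2 : IntegrableOn
      (fun x => (Lam N y x)^2 * (x ^ ((3:ℝ)/2) * (1-x) ^ (N/2 - 1))) (Ioo 0 1)) :
    IntegrableOn (fun t => wfun N t * Lam N y t) (Ioo 0 1) := by
  refine (wlam_abs_integrableOn N hN y hy hyX2).mono'
    (((wfun_contOn N).mul (Lam_contOn N y hy)).aestronglyMeasurable measurableSet_Ioo) ?_
  filter_upwards [ae_restrict_mem measurableSet_Ioo] with t ht
  rw [Real.norm_eq_abs, abs_mul, abs_of_nonneg (wfun_nonneg N ht.1.le ht.2.le)]

lemma intbound_left (N : ℝ) (hN : 4 ≤ N) (y : ℝ → ℝ) (hy : ContDiffOn ℝ 2 y (Ioo 0 1))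
    (hyX2 : IntegrableOn
      (fun x => (Lam N y x)^2 * (x ^ ((3:ℝ)/2) * (1-x) ^ (N/2 - 1))) (Ioo 0 1))
    {x : ℝ} (hx : x ∈ Ioo (0:ℝ) 1) :
    ∫ t in Ioo 0 x, wfun N t * |Lam N y t| ≤
      ((∫ t in Ioo (0:ℝ) 1, (Lam N y t)^2 * wfun N t)/2 + 1) * x ^ ((5:ℝ)/4) := by
  obtain ⟨hx0, hx1⟩ := hx
  set A := ∫ t in Ioo (0:ℝ) 1, (Lam N y t)^2 * wfun N t with hAdef
  have hyX2' : IntegrableOn (fun t => (Lam N y t)^2 * wfun N t) (Ioo 0 1) := hyX2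
  have hA0 : 0 ≤ A := setIntegral_nonneg measurableSet_Ioo
    (fun t ht => mul_nonneg (sq_nonneg _) (wfun_nonneg N ht.1.le ht.2.le))
  set ε := x ^ ((5:ℝ)/4) with hεdef
  have hε0 : 0 < ε := Real.rpow_pos_of_pos hx0 _
  have hsub : Ioo 0 x ⊆ Ioo (0:ℝ) 1 := Ioo_subset_Ioo le_rfl hx1.le
  have h1 : IntegrableOn (fun t => (Lam N y t)^2 * wfun N t) (Ioo 0 x) := hyX2'.mono_set hsub
  have h2 : IntegrableOn (wfun N) (Ioo 0 x) := (wfun_integrableOn N hN).mono_set hsub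
  have habs : IntegrableOn (fun t => wfun N t * |Lam N y t|) (Ioo 0 x) :=
    (wlam_abs_integrableOn N hN y hy hyX2).mono_set hsub
  have step1 : ∫ t in Ioo 0 x, wfun N t * |Lam N y t| ≤
      ∫ t in Ioo 0 x, (ε/2 * ((Lam N y t)^2 * wfun N t) + 1/(2*ε) * wfun N t) := by
    refine setIntegral_mono_on habs
      ((h1.const_mul (ε/2)).add (h2.const_mul (1/(2*ε)))) measurableSet_Ioo ?_
    intro t ht
    have hw := wfun_nonneg N ht.1.le (le_of_lt (lt_of_lt_of_le ht.2 hx1.le))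
    have key : |Lam N y t| ≤ ε/2 * (Lam N y t)^2 + 1/(2*ε) := by
      have h0 : 2*ε*|Lam N y t| ≤ ε^2*(Lam N y t)^2 + 1 := by
        nlinarith [sq_nonneg (ε*|Lam N y t| - 1), sq_abs (Lam N y t)]
      calc |Lam N y t| = (2*ε*|Lam N y t|)/(2*ε) := by field_simp
        _ ≤ (ε^2*(Lam N y t)^2 + 1)/(2*ε) := by gcongr
        _ = ε/2 * (Lam N y t)^2 + 1/(2*ε) := by field_simp
    calc wfun N t * |Lam N y t| ≤ wfun N t * (ε/2 * (Lam N y t)^2 + 1/(2*ε)) :=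
          mul_le_mul_of_nonneg_left key hw
      _ = ε/2 * ((Lam N y t)^2 * wfun N t) + 1/(2*ε) * wfun N t := by ring
  have step2 : ∫ t in Ioo 0 x, (ε/2 * ((Lam N y t)^2 * wfun N t) + 1/(2*ε) * wfun N t)
      = ε/2 * (∫ t in Ioo 0 x, (Lam N y t)^2 * wfun N t)
        + 1/(2*ε) * ∫ t in Ioo 0 x, wfun N t := by
    rw [integral_add (h1.const_mul _) (h2.const_mul _), integral_const_mul, integral_const_mul]
  have step3 : ∫ t in Ioo 0 x, (Lam N y t)^2 * wfun N t ≤ A := by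
    refine setIntegral_mono_set hyX2' ?_ (HasSubset.Subset.eventuallyLE hsub)
    filter_upwards [ae_restrict_mem measurableSet_Ioo] with t ht
    exact mul_nonneg (sq_nonneg _) (wfun_nonneg N ht.1.le ht.2.le)
  have step4 : ∫ t in Ioo 0 x, wfun N t ≤ x ^ ((5:ℝ)/2) := by
    have hb : IntegrableOn (fun t : ℝ => t ^ ((3:ℝ)/2)) (Ioo 0 x) :=
      (intervalIntegral.integrableOn_Ioo_rpow_iff hx0).mpr (by norm_num)
    have hmono : ∫ t in Ioo 0 x, wfun N t ≤ ∫ t in Ioo 0 x, t ^ ((3:ℝ)/2) :=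
      setIntegral_mono_on h2 hb measurableSet_Ioo
        (fun t ht => wfun_le_left N hN ht.1.le (le_of_lt (lt_of_lt_of_le ht.2 hx1.le)))
    have hval : ∫ t in Ioo 0 x, (t:ℝ) ^ ((3:ℝ)/2)
        = (x ^ ((3:ℝ)/2 + 1) - (0:ℝ) ^ ((3:ℝ)/2 + 1))/((3:ℝ)/2 + 1) := by
      rw [← integral_Ioc_eq_integral_Ioo, ← intervalIntegral.integral_of_le hx0.le,
        integral_rpow (Or.inl (by norm_num))]
    rw [hval] at hmono
    have hz : (0:ℝ) ^ ((3:ℝ)/2 + 1) = 0 := Real.zero_rpow (by norm_num)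
    have he : (3:ℝ)/2 + 1 = 5/2 := by norm_num
    rw [hz, he] at hmono
    have := Real.rpow_nonneg hx0.le ((5:ℝ)/2)
    linarith
  have hεε : x ^ ((5:ℝ)/2) = ε * ε := by
    rw [hεdef, ← Real.rpow_add hx0]; norm_num
  have hfinal : ε/2 * A + 1/(2*ε) * (x ^ ((5:ℝ)/2)) = ε/2*A + ε/2 := by
    rw [hεε]; field_simp
  calc ∫ t in Ioo 0 x, wfun N t * |Lam N y t|
      ≤ ε/2 * (∫ t in Ioo 0 x, (Lam N y t)^2 * wfun N t)
        + 1/(2*ε) * ∫ t in Ioo 0 x, wfun N t := by rw [← step2]; exact step1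
    _ ≤ ε/2 * A + 1/(2*ε) * (x ^ ((5:ℝ)/2)) := by gcongr
    _ = ε/2*A + ε/2 := hfinal
    _ ≤ (A/2 + 1) * ε := by nlinarith

lemma intbound_right (N : ℝ) (hN : 4 ≤ N) (y : ℝ → ℝ) (hy : ContDiffOn ℝ 2 y (Ioo 0 1))
    (hyX2 : IntegrableOn
      (fun x => (Lam N y x)^2 * (x ^ ((3:ℝ)/2) * (1-x) ^ (N/2 - 1))) (Ioo 0 1))
    {x : ℝ} (hx : x ∈ Ioo (0:ℝ) 1) :
    ∫ t in Ioo x 1, wfun N t * |Lam N y t| ≤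
      ((∫ t in Ioo (0:ℝ) 1, (Lam N y t)^2 * wfun N t)/2 + 1) * (1-x) ^ (N/4) := by
  obtain ⟨hx0, hx1⟩ := hx
  have h1x : (0:ℝ) < 1 - x := by linarith
  set A := ∫ t in Ioo (0:ℝ) 1, (Lam N y t)^2 * wfun N t with hAdef
  have hyX2' : IntegrableOn (fun t => (Lam N y t)^2 * wfun N t) (Ioo 0 1) := hyX2
  have hA0 : 0 ≤ A := setIntegral_nonneg measurableSet_Ioo
    (fun t ht => mul_nonneg (sq_nonneg _) (wfun_nonneg N ht.1.le ht.2.le))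
  set ε := (1-x) ^ (N/4) with hεdef
  have hε0 : 0 < ε := Real.rpow_pos_of_pos h1x _
  have hsub : Ioo x 1 ⊆ Ioo (0:ℝ) 1 := Ioo_subset_Ioo hx0.le le_rfl
  have h1 : IntegrableOn (fun t => (Lam N y t)^2 * wfun N t) (Ioo x 1) := hyX2'.mono_set hsub
  have h2 : IntegrableOn (wfun N) (Ioo x 1) := (wfun_integrableOn N hN).mono_set hsub
  have habs : IntegrableOn (fun t => wfun N t * |Lam N y t|) (Ioo x 1) :=
    (wlam_abs_integrableOn N hN y hy hyX2).mono_set hsub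
  have step1 : ∫ t in Ioo x 1, wfun N t * |Lam N y t| ≤
      ∫ t in Ioo x 1, (ε/2 * ((Lam N y t)^2 * wfun N t) + 1/(2*ε) * wfun N t) := by
    refine setIntegral_mono_on habs
      ((h1.const_mul (ε/2)).add (h2.const_mul (1/(2*ε)))) measurableSet_Ioo ?_
    intro t ht
    have hw := wfun_nonneg N (le_of_lt (lt_of_le_of_lt hx0.le ht.1)) ht.2.le
    have key : |Lam N y t| ≤ ε/2 * (Lam N y t)^2 + 1/(2*ε) := by
      have h0 : 2*ε*|Lam N y t| ≤ ε^2*(Lam N y t)^2 + 1 := by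
        nlinarith [sq_nonneg (ε*|Lam N y t| - 1), sq_abs (Lam N y t)]
      calc |Lam N y t| = (2*ε*|Lam N y t|)/(2*ε) := by field_simp
        _ ≤ (ε^2*(Lam N y t)^2 + 1)/(2*ε) := by gcongr
        _ = ε/2 * (Lam N y t)^2 + 1/(2*ε) := by field_simp
    calc wfun N t * |Lam N y t| ≤ wfun N t * (ε/2 * (Lam N y t)^2 + 1/(2*ε)) :=
          mul_le_mul_of_nonneg_left key hw
      _ = ε/2 * ((Lam N y t)^2 * wfun N t) + 1/(2*ε) * wfun N t := by ring
  have step2 : ∫ t in Ioo x 1, (ε/2 * ((Lam N y t)^2 * wfun N t) + 1/(2*ε) * wfun N t)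
      = ε/2 * (∫ t in Ioo x 1, (Lam N y t)^2 * wfun N t)
        + 1/(2*ε) * ∫ t in Ioo x 1, wfun N t := by
    rw [integral_add (h1.const_mul _) (h2.const_mul _), integral_const_mul, integral_const_mul]
  have step3 : ∫ t in Ioo x 1, (Lam N y t)^2 * wfun N t ≤ A := by
    refine setIntegral_mono_set hyX2' ?_ (HasSubset.Subset.eventuallyLE hsub)
    filter_upwards [ae_restrict_mem measurableSet_Ioo] with t ht
    exact mul_nonneg (sq_nonneg _) (wfun_nonneg N ht.1.le ht.2.le)
  have step4 : ∫ t in Ioo x 1, wfun N t ≤ (1-x) ^ (N/2) := by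
    have hIb : IntervalIntegrable (fun t : ℝ => (1-t) ^ (N/2-1)) volume x 1 := by
      have h0 : IntervalIntegrable (fun u : ℝ => u ^ (N/2-1)) volume 0 (1-x) :=
        intervalIntegral.intervalIntegrable_rpow' (by linarith)
      have h1 := h0.comp_sub_left 1
      simpa using h1.symm
    have hb : IntegrableOn (fun t : ℝ => (1-t) ^ (N/2-1)) (Ioo x 1) :=
      (intervalIntegrable_iff_integrableOn_Ioo_of_le hx1.le).mp hIb
    have hmono : ∫ t in Ioo x 1, wfun N t ≤ ∫ t in Ioo x 1, (1-t) ^ (N/2-1) :=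
      setIntegral_mono_on h2 hb measurableSet_Ioo
        (fun t ht => wfun_le_right N (le_of_lt (lt_of_le_of_lt hx0.le ht.1)) ht.2.le)
    have hval : ∫ t in Ioo x 1, (1-t) ^ (N/2-1)
        = ((1-x) ^ (N/2-1+1) - (0:ℝ) ^ (N/2-1+1))/(N/2-1+1) := by
      rw [← integral_Ioc_eq_integral_Ioo, ← intervalIntegral.integral_of_le hx1.le]
      have := intervalIntegral.integral_comp_sub_left (a := x) (b := 1)
        (fun u : ℝ => u ^ (N/2-1)) 1
      simp only [sub_self, sub_zero] at this
      rw [this, integral_rpow (Or.inl (by linarith))]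
    rw [hval] at hmono
    have hz : (0:ℝ) ^ (N/2-1+1) = 0 := Real.zero_rpow (by intro h; rw [sub_add_cancel] at h; linarith)
    have he : N/2-1+1 = N/2 := by ring
    rw [hz, he] at hmono
    have hnn := Real.rpow_nonneg h1x.le (N/2)
    have : ((1-x) ^ (N/2) - 0)/(N/2) ≤ (1-x) ^ (N/2) := by
      rw [sub_zero]
      exact div_le_self hnn (by linarith)
    linarith
  have hεε : (1-x) ^ (N/2) = ε * ε := by
    rw [hεdef, ← Real.rpow_add h1x]
    congr 1; ring
  have hfinal : ε/2 * A + 1/(2*ε) * ((1-x) ^ (N/2)) = ε/2*A + ε/2 := by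
    rw [hεε]; field_simp
  calc ∫ t in Ioo x 1, wfun N t * |Lam N y t|
      ≤ ε/2 * (∫ t in Ioo x 1, (Lam N y t)^2 * wfun N t)
        + 1/(2*ε) * ∫ t in Ioo x 1, wfun N t := by rw [← step2]; exact step1
    _ ≤ ε/2 * A + 1/(2*ε) * ((1-x) ^ (N/2)) := by gcongr
    _ = ε/2*A + ε/2 := hfinal
    _ ≤ (A/2 + 1) * ε := by nlinarith

lemma Ffun_sq_le_left (N : ℝ) (hN : 4 ≤ N) (y : ℝ → ℝ) {a : ℝ} (ha : a ∈ Ioo (0:ℝ) 1) :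
    Ffun N y a ^ 2 ≤ a * (a*(1-a)*(deriv y a)^2 * wfun N a) := by
  obtain ⟨ha0, ha1⟩ := ha
  have h1a : (0:ℝ) < 1 - a := by linarith
  set p := a ^ ((1:ℝ)/2) with hp
  set q := (1-a) ^ (N/2 - 1) with hq
  have e52 : a ^ ((5:ℝ)/2) = a * (a * p) := by
    rw [hp, show (5:ℝ)/2 = 1 + (1 + 1/2) by norm_num, Real.rpow_add ha0, Real.rpow_add ha0,
      Real.rpow_one]
  have e32 : a ^ ((3:ℝ)/2) = a * p := by
    rw [hp, show (3:ℝ)/2 = 1 + 1/2 by norm_num, Real.rpow_add ha0, Real.rpow_one]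
  have eN2 : (1-a) ^ (N/2) = (1-a) * q := by
    have h := Real.rpow_add h1a 1 (N/2 - 1)
    rw [Real.rpow_one] at h
    rw [hq, ← h]; congr 1; ring
  have key : Ffun N y a ^ 2
      = (a * (a*(1-a)*(deriv y a)^2 * wfun N a)) * (a * p * ((1-a) * q)) := by
    simp only [Ffun, wfun, e52, e32, eN2]; ring
  have hp0 : 0 ≤ p := Real.rpow_nonneg ha0.le _
  have hq0 : 0 ≤ q := Real.rpow_nonneg h1a.le _
  have hp1 : p ≤ 1 := Real.rpow_le_one ha0.le ha1.le (by norm_num)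
  have hq1 : q ≤ 1 := Real.rpow_le_one (by linarith) (by linarith) (by linarith)
  have hfac : a * p * ((1-a) * q) ≤ 1 :=
    mul_le_one₀ (mul_le_one₀ ha1.le hp0 hp1) (mul_nonneg h1a.le hq0)
      (mul_le_one₀ (by linarith) hq0 hq1)
  have hfac0 : 0 ≤ a * p * ((1-a) * q) := by positivity
  have hR0 : 0 ≤ a * (a*(1-a)*(deriv y a)^2 * wfun N a) := by
    have := wfun_nonneg N ha0.le ha1.le
    positivity
  calc Ffun N y a ^ 2 = (a * (a*(1-a)*(deriv y a)^2 * wfun N a)) * (a * p * ((1-a) * q)) := key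
    _ ≤ (a * (a*(1-a)*(deriv y a)^2 * wfun N a)) * 1 := by gcongr
    _ = a * (a*(1-a)*(deriv y a)^2 * wfun N a) := by ring

lemma Ffun_sq_le_right (N : ℝ) (hN : 4 ≤ N) (y : ℝ → ℝ) {a : ℝ} (ha : a ∈ Ioo (0:ℝ) 1) :
    Ffun N y a ^ 2 ≤ (1-a) * (a*(1-a)*(deriv y a)^2 * wfun N a) := by
  obtain ⟨ha0, ha1⟩ := ha
  have h1a : (0:ℝ) < 1 - a := by linarith
  set p := a ^ ((1:ℝ)/2) with hp
  set q := (1-a) ^ (N/2 - 1) with hq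
  have e52 : a ^ ((5:ℝ)/2) = a * (a * p) := by
    rw [hp, show (5:ℝ)/2 = 1 + (1 + 1/2) by norm_num, Real.rpow_add ha0, Real.rpow_add ha0,
      Real.rpow_one]
  have e32 : a ^ ((3:ℝ)/2) = a * p := by
    rw [hp, show (3:ℝ)/2 = 1 + 1/2 by norm_num, Real.rpow_add ha0, Real.rpow_one]
  have eN2 : (1-a) ^ (N/2) = (1-a) * q := by
    have h := Real.rpow_add h1a 1 (N/2 - 1)
    rw [Real.rpow_one] at h
    rw [hq, ← h]; congr 1; ring
  have key : Ffun N y a ^ 2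
      = ((1-a) * (a*(1-a)*(deriv y a)^2 * wfun N a)) * (a * (a * (p * q))) := by
    simp only [Ffun, wfun, e52, e32, eN2]; ring
  have hp0 : 0 ≤ p := Real.rpow_nonneg ha0.le _
  have hq0 : 0 ≤ q := Real.rpow_nonneg h1a.le _
  have hp1 : p ≤ 1 := Real.rpow_le_one ha0.le ha1.le (by norm_num)
  have hq1 : q ≤ 1 := Real.rpow_le_one (by linarith) (by linarith) (by linarith)
  have hfac : a * (a * (p * q)) ≤ 1 :=
    mul_le_one₀ ha1.le (mul_nonneg ha0.le (mul_nonneg hp0 hq0))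
      (mul_le_one₀ ha1.le (mul_nonneg hp0 hq0) (mul_le_one₀ hp1 hq0 hq1))
  have hfac0 : 0 ≤ a * (a * (p * q)) := by positivity
  have hR0 : 0 ≤ (1-a) * (a*(1-a)*(deriv y a)^2 * wfun N a) := by
    have := wfun_nonneg N ha0.le ha1.le
    positivity
  calc Ffun N y a ^ 2 = ((1-a) * (a*(1-a)*(deriv y a)^2 * wfun N a)) * (a * (a * (p * q))) := key
    _ ≤ ((1-a) * (a*(1-a)*(deriv y a)^2 * wfun N a)) * 1 := by gcongr
    _ = (1-a) * (a*(1-a)*(deriv y a)^2 * wfun N a) := by ring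

lemma exists_small_left (N : ℝ) (hN : 4 ≤ N) (y : ℝ → ℝ)
    (hyX1 : IntegrableOn
      (fun x => (x*(1-x)) * (deriv y x)^2 * (x ^ ((3:ℝ)/2) * (1-x) ^ (N/2 - 1)))
      (Ioo 0 1))
    {x : ℝ} (hx : x ∈ Ioo (0:ℝ) 1) {ε : ℝ} (hε : 0 < ε) :
    ∃ a ∈ Ioo (0:ℝ) x, |Ffun N y a| ≤ ε := by
  by_contra hcon
  push_neg at hcon
  have hyX1' : IntegrableOn (fun a => a*(1-a)*(deriv y a)^2 * wfun N a) (Ioo 0 1) := hyX1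
  have hh : IntegrableOn (fun a => a*(1-a)*(deriv y a)^2 * wfun N a) (Ioo 0 x) :=
    hyX1'.mono_set (Ioo_subset_Ioo le_rfl hx.2.le)
  have hbad : ∀ a ∈ Ioo (0:ℝ) x, ε^2 * a⁻¹ ≤ a*(1-a)*(deriv y a)^2 * wfun N a := by
    intro a ha
    have ha' : a ∈ Ioo (0:ℝ) 1 := ⟨ha.1, lt_of_lt_of_le ha.2 hx.2.le⟩
    have h1 := (hcon a ha).le
    have h2 : ε^2 ≤ Ffun N y a ^ 2 := by nlinarith [abs_nonneg (Ffun N y a), sq_abs (Ffun N y a)]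
    have h3 := Ffun_sq_le_left N hN y ha'
    have h4 : ε^2 ≤ a * (a*(1-a)*(deriv y a)^2 * wfun N a) := le_trans h2 h3
    have h5 : ε^2/a ≤ a*(1-a)*(deriv y a)^2 * wfun N a := by
      rw [div_le_iff₀ ha.1]
      linarith [mul_comm a (a*(1-a)*(deriv y a)^2 * wfun N a)]
    rwa [div_eq_mul_inv] at h5
  have hinv : IntegrableOn (fun a : ℝ => a⁻¹) (Ioo 0 x) := by
    refine (hh.const_mul (ε^2)⁻¹).mono' measurable_inv.aestronglyMeasurable ?_
    filter_upwards [ae_restrict_mem measurableSet_Ioo] with a ha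
    rw [Real.norm_eq_abs, abs_of_nonneg (inv_nonneg.mpr ha.1.le)]
    have := hbad a ha
    have hε2 : (0:ℝ) < ε^2 := by positivity
    calc a⁻¹ = (ε^2)⁻¹ * (ε^2 * a⁻¹) := by field_simp
      _ ≤ (ε^2)⁻¹ * (a*(1-a)*(deriv y a)^2 * wfun N a) := by gcongr
  have hII : IntervalIntegrable (fun a : ℝ => a⁻¹) volume 0 x :=
    (intervalIntegrable_iff_integrableOn_Ioo_of_le hx.1.le).mpr hinv
  rw [intervalIntegrable_inv_iff] at hII
  rcases hII with h | h
  · exact hx.1.ne h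
  · exact h left_mem_uIcc

lemma exists_small_right (N : ℝ) (hN : 4 ≤ N) (y : ℝ → ℝ)
    (hyX1 : IntegrableOn
      (fun x => (x*(1-x)) * (deriv y x)^2 * (x ^ ((3:ℝ)/2) * (1-x) ^ (N/2 - 1)))
      (Ioo 0 1))
    {x : ℝ} (hx : x ∈ Ioo (0:ℝ) 1) {ε : ℝ} (hε : 0 < ε) :
    ∃ a ∈ Ioo x (1:ℝ), |Ffun N y a| ≤ ε := by
  by_contra hcon
  push_neg at hcon
  have hyX1' : IntegrableOn (fun a => a*(1-a)*(deriv y a)^2 * wfun N a) (Ioo 0 1) := hyX1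
  have hh : IntegrableOn (fun a => a*(1-a)*(deriv y a)^2 * wfun N a) (Ioo x 1) :=
    hyX1'.mono_set (Ioo_subset_Ioo hx.1.le le_rfl)
  have hbad : ∀ a ∈ Ioo x (1:ℝ), ε^2 * (1-a)⁻¹ ≤ a*(1-a)*(deriv y a)^2 * wfun N a := by
    intro a ha
    have ha' : a ∈ Ioo (0:ℝ) 1 := ⟨lt_of_le_of_lt hx.1.le ha.1, ha.2⟩
    have h1a : (0:ℝ) < 1 - a := by linarith [ha.2]
    have h1 := (hcon a ha).le
    have h2 : ε^2 ≤ Ffun N y a ^ 2 := by nlinarith [abs_nonneg (Ffun N y a), sq_abs (Ffun N y a)]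
    have h3 := Ffun_sq_le_right N hN y ha'
    have h4 : ε^2 ≤ (1-a) * (a*(1-a)*(deriv y a)^2 * wfun N a) := le_trans h2 h3
    have h5 : ε^2/(1-a) ≤ a*(1-a)*(deriv y a)^2 * wfun N a := by
      rw [div_le_iff₀ h1a]
      linarith [mul_comm (1-a) (a*(1-a)*(deriv y a)^2 * wfun N a)]
    rwa [div_eq_mul_inv] at h5
  have hinv : IntegrableOn (fun a : ℝ => (1-a)⁻¹) (Ioo x 1) := by
    refine (hh.const_mul (ε^2)⁻¹).mono' ?_ ?_
    · exact ((measurable_const.sub measurable_id).inv).aestronglyMeasurable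
    · filter_upwards [ae_restrict_mem measurableSet_Ioo] with a ha
      have h1a : (0:ℝ) < 1 - a := by linarith [ha.2]
      rw [Real.norm_eq_abs, abs_of_nonneg (inv_nonneg.mpr h1a.le)]
      have := hbad a ha
      have hε2 : (0:ℝ) < ε^2 := by positivity
      calc (1-a)⁻¹ = (ε^2)⁻¹ * (ε^2 * (1-a)⁻¹) := by field_simp
        _ ≤ (ε^2)⁻¹ * (a*(1-a)*(deriv y a)^2 * wfun N a) := by gcongr
  have hII : IntervalIntegrable (fun a : ℝ => (1-a)⁻¹) volume x 1 :=
    (intervalIntegrable_iff_integrableOn_Ioo_of_le hx.2.le).mpr hinv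
  have hII2 := hII.comp_sub_left 1
  simp only [sub_sub_cancel, sub_self, sub_zero] at hII2
  rw [intervalIntegrable_inv_iff] at hII2
  have h1x : (0:ℝ) < 1 - x := by linarith [hx.2]
  rcases hII2 with h | h
  · rcases h with h'
    · linarith [h1x]
  · exact h right_mem_uIcc

lemma Fbound_left (N : ℝ) (hN : 4 ≤ N) (y : ℝ → ℝ) (hy : ContDiffOn ℝ 2 y (Ioo 0 1))
    (hyX1 : IntegrableOn
      (fun x => (x*(1-x)) * (deriv y x)^2 * (x ^ ((3:ℝ)/2) * (1-x) ^ (N/2 - 1)))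
      (Ioo 0 1))
    (hyX2 : IntegrableOn
      (fun x => (Lam N y x)^2 * (x ^ ((3:ℝ)/2) * (1-x) ^ (N/2 - 1))) (Ioo 0 1))
    {x : ℝ} (hx : x ∈ Ioo (0:ℝ) 1) :
    |Ffun N y x| ≤
      ((∫ t in Ioo (0:ℝ) 1, (Lam N y t)^2 * wfun N t)/2 + 1) * x ^ ((5:ℝ)/4) := by
  refine le_of_forall_pos_le_add ?_
  intro ε hε
  obtain ⟨a, ha, haF⟩ := exists_small_left N hN y hyX1 hx hε
  have hsub : uIcc a x ⊆ Ioo (0:ℝ) 1 := by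
    rw [uIcc_of_le ha.2.le]
    exact fun t ht => ⟨lt_of_lt_of_le ha.1 ht.1, lt_of_le_of_lt ht.2 hx.2⟩
  have hderiv : ∀ t ∈ uIcc a x, HasDerivAt (Ffun N y) (wfun N t * Lam N y t) t :=
    fun t ht => Ffun_hasDerivAt N y hy (hsub ht)
  have hint : IntervalIntegrable (fun t => wfun N t * Lam N y t) volume a x := by
    rw [intervalIntegrable_iff_integrableOn_Ioo_of_le ha.2.le]
    exact (wlam_integrableOn N hN y hy hyX2).mono_set
      (fun t ht => ⟨lt_trans ha.1 ht.1, lt_trans ht.2 hx.2⟩)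
  have hFTC : ∫ t in a..x, wfun N t * Lam N y t = Ffun N y x - Ffun N y a :=
    intervalIntegral.integral_eq_sub_of_hasDerivAt hderiv hint
  have habs : |∫ t in a..x, wfun N t * Lam N y t| ≤ ∫ t in Ioo 0 x, wfun N t * |Lam N y t| := by
    have hai : IntegrableOn (fun t => wfun N t * |Lam N y t|) (Ioo 0 x) :=
      (wlam_abs_integrableOn N hN y hy hyX2).mono_set (Ioo_subset_Ioo le_rfl hx.2.le)
    calc |∫ t in a..x, wfun N t * Lam N y t| ≤ ∫ t in a..x, |wfun N t * Lam N y t| :=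
        intervalIntegral.abs_integral_le_integral_abs ha.2.le
      _ = ∫ t in Ioo a x, |wfun N t * Lam N y t| := by
        rw [intervalIntegral.integral_of_le ha.2.le, integral_Ioc_eq_integral_Ioo]
      _ = ∫ t in Ioo a x, wfun N t * |Lam N y t| := by
        refine setIntegral_congr_fun measurableSet_Ioo (fun t ht => ?_)
        rw [abs_mul, abs_of_nonneg (wfun_nonneg N (le_of_lt (lt_trans ha.1 ht.1))
          (le_of_lt (lt_trans ht.2 hx.2)))]
      _ ≤ ∫ t in Ioo 0 x, wfun N t * |Lam N y t| := by
        refine setIntegral_mono_set hai ?_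
          (HasSubset.Subset.eventuallyLE (Ioo_subset_Ioo ha.1.le le_rfl))
        filter_upwards [ae_restrict_mem measurableSet_Ioo] with t ht
        exact mul_nonneg (wfun_nonneg N ht.1.le (le_of_lt (lt_trans ht.2 hx.2))) (abs_nonneg _)
  have hIb := intbound_left N hN y hy hyX2 hx
  calc |Ffun N y x| = |Ffun N y a + (Ffun N y x - Ffun N y a)| := by ring_nf
    _ ≤ |Ffun N y a| + |Ffun N y x - Ffun N y a| := abs_add_le _ _
    _ ≤ ε + |∫ t in a..x, wfun N t * Lam N y t| := by rw [hFTC]; linarith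
    _ ≤ ε + ∫ t in Ioo 0 x, wfun N t * |Lam N y t| := by linarith
    _ ≤ ((∫ t in Ioo (0:ℝ) 1, (Lam N y t)^2 * wfun N t)/2 + 1) * x ^ ((5:ℝ)/4) + ε := by
        linarith

lemma Fbound_right (N : ℝ) (hN : 4 ≤ N) (y : ℝ → ℝ) (hy : ContDiffOn ℝ 2 y (Ioo 0 1))
    (hyX1 : IntegrableOn
      (fun x => (x*(1-x)) * (deriv y x)^2 * (x ^ ((3:ℝ)/2) * (1-x) ^ (N/2 - 1)))
      (Ioo 0 1))
    (hyX2 : IntegrableOn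
      (fun x => (Lam N y x)^2 * (x ^ ((3:ℝ)/2) * (1-x) ^ (N/2 - 1))) (Ioo 0 1))
    {x : ℝ} (hx : x ∈ Ioo (0:ℝ) 1) :
    |Ffun N y x| ≤
      ((∫ t in Ioo (0:ℝ) 1, (Lam N y t)^2 * wfun N t)/2 + 1) * (1-x) ^ (N/4) := by
  refine le_of_forall_pos_le_add ?_
  intro ε hε
  obtain ⟨a, ha, haF⟩ := exists_small_right N hN y hyX1 hx hε
  have hsub : uIcc x a ⊆ Ioo (0:ℝ) 1 := by
    rw [uIcc_of_le ha.1.le]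
    exact fun t ht => ⟨lt_of_lt_of_le hx.1 ht.1, lt_of_le_of_lt ht.2 ha.2⟩
  have hderiv : ∀ t ∈ uIcc x a, HasDerivAt (Ffun N y) (wfun N t * Lam N y t) t :=
    fun t ht => Ffun_hasDerivAt N y hy (hsub ht)
  have hint : IntervalIntegrable (fun t => wfun N t * Lam N y t) volume x a := by
    rw [intervalIntegrable_iff_integrableOn_Ioo_of_le ha.1.le]
    exact (wlam_integrableOn N hN y hy hyX2).mono_set
      (fun t ht => ⟨lt_trans hx.1 ht.1, lt_trans ht.2 ha.2⟩)
  have hFTC : ∫ t in x..a, wfun N t * Lam N y t = Ffun N y a - Ffun N y x :=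
    intervalIntegral.integral_eq_sub_of_hasDerivAt hderiv hint
  have habs : |∫ t in x..a, wfun N t * Lam N y t| ≤ ∫ t in Ioo x 1, wfun N t * |Lam N y t| := by
    have hai : IntegrableOn (fun t => wfun N t * |Lam N y t|) (Ioo x 1) :=
      (wlam_abs_integrableOn N hN y hy hyX2).mono_set (Ioo_subset_Ioo hx.1.le le_rfl)
    calc |∫ t in x..a, wfun N t * Lam N y t| ≤ ∫ t in x..a, |wfun N t * Lam N y t| :=
        intervalIntegral.abs_integral_le_integral_abs ha.1.le
      _ = ∫ t in Ioo x a, |wfun N t * Lam N y t| := by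
        rw [intervalIntegral.integral_of_le ha.1.le, integral_Ioc_eq_integral_Ioo]
      _ = ∫ t in Ioo x a, wfun N t * |Lam N y t| := by
        refine setIntegral_congr_fun measurableSet_Ioo (fun t ht => ?_)
        rw [abs_mul, abs_of_nonneg (wfun_nonneg N (le_of_lt (lt_trans hx.1 ht.1))
          (le_of_lt (lt_trans ht.2 ha.2)))]
      _ ≤ ∫ t in Ioo x 1, wfun N t * |Lam N y t| := by
        refine setIntegral_mono_set hai ?_
          (HasSubset.Subset.eventuallyLE (Ioo_subset_Ioo le_rfl ha.2.le))
        filter_upwards [ae_restrict_mem measurableSet_Ioo] with t ht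
        exact mul_nonneg (wfun_nonneg N (le_of_lt (lt_trans hx.1 ht.1)) ht.2.le) (abs_nonneg _)
  have hIb := intbound_right N hN y hy hyX2 hx
  calc |Ffun N y x| = |Ffun N y a + (Ffun N y x - Ffun N y a)| := by ring_nf
    _ ≤ |Ffun N y a| + |Ffun N y x - Ffun N y a| := abs_add_le _ _
    _ = |Ffun N y a| + |Ffun N y a - Ffun N y x| := by rw [abs_sub_comm]
    _ ≤ ε + |∫ t in x..a, wfun N t * Lam N y t| := by rw [hFTC]; linarith
    _ ≤ ε + ∫ t in Ioo x 1, wfun N t * |Lam N y t| := by linarith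
    _ ≤ ((∫ t in Ioo (0:ℝ) 1, (Lam N y t)^2 * wfun N t)/2 + 1) * (1-x) ^ (N/4) + ε := by
        linarith

/-- Pointwise derivative bound for functions in the weighted space
`𝔛² = {y : y, √(x(1-x)) y', Λy ∈ L²((0,1), x^{3/2}(1-x)^{N/2-1} dx)}`:
`|x^{5/2}(1-x)^{N/2} y'(x)| ≤ C x^{5/4}(1-x)^{N/4}`. -/
theorem pointwise_derivative_bound_X2 (N : ℝ) (hN : 4 ≤ N) (y : ℝ → ℝ)
    (hy : ContDiffOn ℝ 2 y (Ioo 0 1))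
    (hyX : IntegrableOn
      (fun x => y x^2 * (x ^ ((3:ℝ)/2) * (1-x) ^ (N/2 - 1))) (Ioo 0 1))
    (hyX1 : IntegrableOn
      (fun x => (x*(1-x)) * (deriv y x)^2 * (x ^ ((3:ℝ)/2) * (1-x) ^ (N/2 - 1)))
      (Ioo 0 1))
    (hyX2 : IntegrableOn
      (fun x => (Lam N y x)^2 * (x ^ ((3:ℝ)/2) * (1-x) ^ (N/2 - 1))) (Ioo 0 1)) :
    ∃ C > 0, ∀ x ∈ Ioo (0:ℝ) 1,
      |x ^ ((5:ℝ)/2) * (1-x) ^ (N/2) * deriv y x|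
        ≤ C * x ^ ((5:ℝ)/4) * (1-x) ^ (N/4) := by
  set A := ∫ t in Ioo (0:ℝ) 1, (Lam N y t)^2 * wfun N t with hAdef
  have hA0 : 0 ≤ A := setIntegral_nonneg measurableSet_Ioo
    (fun t ht => mul_nonneg (sq_nonneg _) (wfun_nonneg N ht.1.le ht.2.le))
  set B := A/2 + 1 with hBdef
  have hB0 : 0 < B := by rw [hBdef]; linarith
  have h2N : (0:ℝ) < (2:ℝ) ^ (N/4) := Real.rpow_pos_of_pos two_pos _
  have h25 : (0:ℝ) < (2:ℝ) ^ ((5:ℝ)/4) := Real.rpow_pos_of_pos two_pos _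
  refine ⟨B * (2:ℝ) ^ (N/4) * (2:ℝ) ^ ((5:ℝ)/4),
    mul_pos (mul_pos hB0 h2N) h25, ?_⟩
  intro x hx
  have hx0 := hx.1
  have hx1 := hx.2
  have h1x : (0:ℝ) < 1 - x := by linarith
  show |Ffun N y x| ≤ _
  rcases le_total x (1/2) with hle | hle
  · have hL := Fbound_left N hN y hy hyX1 hyX2 hx
    have h2 : (1:ℝ) ≤ (2:ℝ) ^ (N/4) * (1-x) ^ (N/4) := by
      have hhalf : (2:ℝ)⁻¹ ≤ 1-x := by linarith
      have h := Real.rpow_le_rpow (by norm_num) hhalf (by linarith : (0:ℝ) ≤ N/4)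
      rw [Real.inv_rpow (by norm_num)] at h
      calc (1:ℝ) = (2:ℝ) ^ (N/4) * ((2:ℝ) ^ (N/4))⁻¹ := by field_simp
        _ ≤ (2:ℝ) ^ (N/4) * (1-x) ^ (N/4) := by gcongr
    have h3 : (1:ℝ) ≤ (2:ℝ) ^ ((5:ℝ)/4) := Real.one_le_rpow (by norm_num) (by norm_num)
    have hBx0 : 0 ≤ B * x ^ ((5:ℝ)/4) := mul_nonneg hB0.le (Real.rpow_nonneg hx0.le _)
    calc |Ffun N y x| ≤ B * x ^ ((5:ℝ)/4) := hL
      _ ≤ (B * x ^ ((5:ℝ)/4)) * ((2:ℝ) ^ (N/4) * (1-x) ^ (N/4)) :=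
          le_mul_of_one_le_right hBx0 h2
      _ ≤ (B * x ^ ((5:ℝ)/4)) * ((2:ℝ) ^ (N/4) * (1-x) ^ (N/4)) * (2:ℝ) ^ ((5:ℝ)/4) :=
          le_mul_of_one_le_right (mul_nonneg hBx0 (mul_nonneg h2N.le
            (Real.rpow_nonneg h1x.le _))) h3
      _ = B * (2:ℝ) ^ (N/4) * (2:ℝ) ^ ((5:ℝ)/4) * x ^ ((5:ℝ)/4) * (1-x) ^ (N/4) := by ring
  · have hR := Fbound_right N hN y hy hyX1 hyX2 hx
    have h2 : (1:ℝ) ≤ (2:ℝ) ^ ((5:ℝ)/4) * x ^ ((5:ℝ)/4) := by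
      have hhalf : (2:ℝ)⁻¹ ≤ x := by linarith
      have h := Real.rpow_le_rpow (by norm_num) hhalf (by norm_num : (0:ℝ) ≤ 5/4)
      rw [Real.inv_rpow (by norm_num)] at h
      calc (1:ℝ) = (2:ℝ) ^ ((5:ℝ)/4) * ((2:ℝ) ^ ((5:ℝ)/4))⁻¹ := by field_simp
        _ ≤ (2:ℝ) ^ ((5:ℝ)/4) * x ^ ((5:ℝ)/4) := by gcongr
    have h3 : (1:ℝ) ≤ (2:ℝ) ^ (N/4) := Real.one_le_rpow (by norm_num) (by linarith)
    have hBx0 : 0 ≤ B * (1-x) ^ (N/4) := mul_nonneg hB0.le (Real.rpow_nonneg h1x.le _)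
    calc |Ffun N y x| ≤ B * (1-x) ^ (N/4) := hR
      _ ≤ (B * (1-x) ^ (N/4)) * ((2:ℝ) ^ ((5:ℝ)/4) * x ^ ((5:ℝ)/4)) :=
          le_mul_of_one_le_right hBx0 h2
      _ ≤ (B * (1-x) ^ (N/4)) * ((2:ℝ) ^ ((5:ℝ)/4) * x ^ ((5:ℝ)/4)) * (2:ℝ) ^ (N/4) :=
          le_mul_of_one_le_right (mul_nonneg hBx0 (mul_nonneg h25.le
            (Real.rpow_nonneg hx0.le _))) h3
      _ = B * (2:ℝ) ^ (N/4) * (2:ℝ) ^ ((5:ℝ)/4) * x ^ ((5:ℝ)/4) * (1-x) ^ (N/4) := by ring
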